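/- Let w₁, w₂, w₃ ∈ ℝ³ be linearly independent unit vectors, z a unit vector with z·w₁ = 0 and z·wⱼ < −κ for j = 2, 3 with κ ∈ (0,1), and let 0 < s ≤ κ/3. Set d_s = (z − s w₁)/√(1+s²), d^⊥ = w₁ × z, and for τ ≥ k ≥ 0 with τ > 0 set ρ = τ d_s + i√(τ²+k²) d^⊥. Then |τ³ ∫_{𝒦₀} e^{ρ·x} dx| > |w₁·(w₂ × w₃)| / (4s), where 𝒦₀ is the open cone generated by w₁, w₂, w₃. -/

import Mathlib

open MeasureTheory Filter Set

noncomputable section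

/-- Euclidean (bilinear) dot product on `ℝ³`. -/
def dotR (x y : Fin 3 → ℝ) : ℝ := ∑ i, x i * y i

/-- ℂ-bilinear (non-conjugated) dot product on `ℂ³`. -/
def dotC (x y : Fin 3 → ℂ) : ℂ := ∑ i, x i * y i

/-- Euclidean norm on `ℝ³` (the Pi-type sup norm is not the Euclidean one). -/
def nrm (x : Fin 3 → ℝ) : ℝ := Real.sqrt (∑ i, (x i) ^ 2)

/-- Inclusion `ℝ³ ↪ ℂ³`. -/
def toC (x : Fin 3 → ℝ) : Fin 3 → ℂ := fun i => (x i : ℂ)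

/-! ### Auxiliary lemmas -/

lemma cexp_integrableOn {a : ℂ} (ha : a.re < 0) :
    IntegrableOn (fun c : ℝ => Complex.exp (c * a)) (Ioi 0) := by
  have hb : (0:ℝ) < -a.re := by linarith
  refine (exp_neg_integrableOn_Ioi 0 hb).mono' ?_ ?_
  · exact (Complex.continuous_exp.comp
      (Complex.continuous_ofReal.mul continuous_const)).aestronglyMeasurable
  · filter_upwards with c
    rw [Complex.norm_exp]
    have : ((c:ℂ) * a).re = -(-a.re) * c := by simp [Complex.mul_re]; ring
    rw [this]

lemma integral_cexp_Ioi {a : ℂ} (ha : a.re < 0) :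
    ∫ c : ℝ in Ioi 0, Complex.exp (c * a) = -a⁻¹ := by
  have ha0 : a ≠ 0 := fun h => by simp [h] at ha
  have hderiv : ∀ x ∈ Ici (0:ℝ),
      HasDerivAt (fun c : ℝ => a⁻¹ * Complex.exp (c * a)) (Complex.exp (x * a)) x := by
    intro x _
    have h1 : HasDerivAt (fun w : ℂ => a⁻¹ * Complex.exp (w * a))
        (a⁻¹ * (Complex.exp ((x:ℂ) * a) * (1 * a))) (x:ℂ) :=
      (((hasDerivAt_id ((x:ℂ))).mul_const a).cexp).const_mul a⁻¹
    have h2 := h1.comp_ofReal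
    have : a⁻¹ * (Complex.exp ((x:ℂ) * a) * (1 * a)) = Complex.exp ((x:ℂ) * a) := by
      field_simp
    rwa [this] at h2
  have htend : Tendsto (fun c : ℝ => a⁻¹ * Complex.exp (c * a)) atTop (nhds 0) := by
    apply squeeze_zero_norm (a := fun c : ℝ => ‖a⁻¹‖ * Real.exp (-(-a.re * c)))
    · intro c
      rw [norm_mul, Complex.norm_exp]
      have : ((c:ℂ) * a).re = -(-a.re * c) := by simp [Complex.mul_re]; ring
      rw [this]
    · have h3 : Tendsto (fun c : ℝ => -(-a.re * c)) atTop atBot := by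
        apply tendsto_neg_atTop_atBot.comp
        exact Tendsto.const_mul_atTop (by linarith) tendsto_id
      have := Real.tendsto_exp_atBot.comp h3
      simpa using this.const_mul ‖a⁻¹‖
  have := integral_Ioi_of_hasDerivAt_of_tendsto' hderiv (cexp_integrableOn ha) htend
  simpa using this

lemma dotR_cs (x y : Fin 3 → ℝ) : (dotR x y)^2 ≤ (∑ i, x i ^2) * (∑ i, y i ^2) := by
  simp only [dotR, Fin.sum_univ_three]
  nlinarith [sq_nonneg (x 0 * y 1 - x 1 * y 0), sq_nonneg (x 0 * y 2 - x 2 * y 0),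
    sq_nonneg (x 1 * y 2 - x 2 * y 1)]

lemma lagrange_cross (u v : Fin 3 → ℝ) :
    ∑ i, (crossProduct u v) i ^ 2 =
      (∑ i, u i ^2) * (∑ i, v i ^2) - (dotR u v)^2 := by
  simp only [cross_apply, dotR, Fin.sum_univ_three]
  simp only [Matrix.cons_val_zero, Matrix.cons_val_one, Matrix.head_cons,
    Matrix.cons_val_two, Matrix.tail_cons]
  ring

lemma sumsq_of_nrm_eq_one {x : Fin 3 → ℝ} (h : nrm x = 1) : ∑ i, x i ^ 2 = 1 := by
  rwa [nrm, Real.sqrt_eq_one] at h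

lemma cone_integral (w : Fin 3 → (Fin 3 → ℝ)) (hli : LinearIndependent ℝ w)
    (ρ : Fin 3 → ℂ) (ha : ∀ j, (dotC ρ (toC (w j))).re < 0) :
    ∫ x in {x | ∃ c : Fin 3 → ℝ, (∀ j, 0 < c j) ∧ x = ∑ j, c j • w j},
        Complex.exp (dotC ρ (toC x))
      = (|(Matrix.of w).det| : ℝ) * ∏ j, -(dotC ρ (toC (w j)))⁻¹ := by
  classical
  set M : Matrix (Fin 3) (Fin 3) ℝ := Matrix.transpose (Matrix.of w) with hM
  set T : (Fin 3 → ℝ) →L[ℝ] (Fin 3 → ℝ) :=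
    LinearMap.toContinuousLinearMap (Matrix.toLin' M) with hTdef
  have hT : ∀ c, T c = ∑ j, c j • w j := by
    intro c
    funext i
    simp only [hTdef, hM, LinearMap.coe_toContinuousLinearMap', Matrix.toLin'_apply,
      Matrix.mulVec, dotProduct, Matrix.transpose_apply, Matrix.of_apply,
      Fin.sum_univ_three, Finset.sum_apply, Pi.smul_apply, smul_eq_mul]
    ring
  have hfT : (fun c : Fin 3 → ℝ => ∑ j, c j • w j) = ⇑T := funext fun c => (hT c).symm
  have hinj : Function.Injective (⇑T) := by
    rw [← hfT]
    intro c c' hcc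
    have hcc' : ∑ j, c j • w j = ∑ j, c' j • w j := hcc
    have hz0 : ∑ j, (c - c') j • w j = 0 := by
      simp only [Pi.sub_apply, sub_smul, Finset.sum_sub_distrib]
      rw [hcc', sub_self]
    have hall := Fintype.linearIndependent_iff.mp hli (c - c') hz0
    funext j
    have := hall j
    rw [Pi.sub_apply, sub_eq_zero] at this
    exact this
  have hset : {x | ∃ c : Fin 3 → ℝ, (∀ j, 0 < c j) ∧ x = ∑ j, c j • w j}
      = ⇑T '' (univ.pi fun _ => Ioi (0:ℝ)) := by
    ext x
    constructor
    · rintro ⟨c, hc, rfl⟩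
      exact ⟨c, fun j _ => hc j, hT c⟩
    · rintro ⟨c, hc, rfl⟩
      exact ⟨c, fun j => hc j (mem_univ j), hT c⟩
  have hS : MeasurableSet (univ.pi fun _ : Fin 3 => Ioi (0:ℝ)) :=
    MeasurableSet.univ_pi fun _ => measurableSet_Ioi
  rw [hset, integral_image_eq_integral_abs_det_fderiv_smul volume hS
      (fun x _ => T.hasFDerivAt.hasFDerivWithinAt) hinj.injOn
      (fun x => Complex.exp (dotC ρ (toC x)))]
  have hTdet : T.det = (Matrix.of w).det := by
    rw [hTdef, ContinuousLinearMap.det, LinearMap.coe_toContinuousLinearMap,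
      LinearMap.det_toLin', hM, Matrix.det_transpose]
  have hgT : ∀ c : Fin 3 → ℝ, dotC ρ (toC (T c)) = ∑ j, (c j : ℂ) * dotC ρ (toC (w j)) := by
    intro c
    simp only [hT, dotC, toC, Fin.sum_univ_three, Finset.sum_apply, Pi.smul_apply,
      smul_eq_mul]
    push_cast
    ring
  simp_rw [hgT, hTdet]
  rw [integral_smul]
  have fub : ∫ c : Fin 3 → ℝ in univ.pi fun _ => Ioi (0:ℝ),
      Complex.exp (∑ j, (c j : ℂ) * dotC ρ (toC (w j)))
      = ∏ j, -(dotC ρ (toC (w j)))⁻¹ := by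
    have h1 : ∀ c : Fin 3 → ℝ, Complex.exp (∑ j, (c j:ℂ) * dotC ρ (toC (w j)))
        = ∏ j, Complex.exp ((c j:ℂ) * dotC ρ (toC (w j))) := fun c => Complex.exp_sum _ _
    simp_rw [h1]
    rw [← integral_indicator hS]
    have h2 : ∀ c : Fin 3 → ℝ,
        (univ.pi fun _ : Fin 3 => Ioi (0:ℝ)).indicator
          (fun c => ∏ j, Complex.exp ((c j:ℂ) * dotC ρ (toC (w j)))) c
        = ∏ j, (Ioi (0:ℝ)).indicator
            (fun t => Complex.exp ((t:ℂ) * dotC ρ (toC (w j)))) (c j) := by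
      intro c
      by_cases hc : c ∈ univ.pi fun _ : Fin 3 => Ioi (0:ℝ)
      · rw [indicator_of_mem hc]
        exact Finset.prod_congr rfl fun j _ =>
          (indicator_of_mem (s := Ioi (0:ℝ)) (hc j (mem_univ j))
            (fun t : ℝ => Complex.exp ((t:ℂ) * dotC ρ (toC (w j))))).symm
      · rw [indicator_of_notMem hc]
        rw [mem_univ_pi] at hc
        push_neg at hc
        obtain ⟨j, hj⟩ := hc
        exact (Finset.prod_eq_zero (Finset.mem_univ j)
          (indicator_of_notMem (s := Ioi (0:ℝ)) hj _)).symm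
    simp_rw [h2]
    rw [MeasureTheory.integral_fintype_prod_volume_eq_prod (fun (j : Fin 3) (t : ℝ) =>
      (Ioi (0:ℝ)).indicator (fun t => Complex.exp ((t:ℂ) * dotC ρ (toC (w j)))) t)]
    refine Finset.prod_congr rfl fun j _ => ?_
    rw [integral_indicator measurableSet_Ioi]
    exact integral_cexp_Ioi (ha j)
  rw [fub, Complex.real_smul]

lemma final_calc (D s τ : ℝ) (hD : 0 < D) (hs : 0 < s) (hτ : 0 < τ) (a : Fin 3 → ℂ)
    (h0 : ‖a 0‖ < τ * s) (h1 : ‖a 1‖ ≤ 2*τ)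
    (h2 : ‖a 2‖ ≤ 2*τ) (hpos : ∀ j, 0 < ‖a j‖) :
    D / (4 * s) < ‖(τ:ℂ)^3 * ((D:ℝ) * ∏ j, -(a j)⁻¹)‖ := by
  have hrw : ‖(τ:ℂ)^3 * ((D:ℝ) * ∏ j, -(a j)⁻¹)‖
      = τ^3 * D / (‖a 0‖ * ‖a 1‖ * ‖a 2‖) := by
    rw [norm_mul, norm_mul, norm_pow, Complex.norm_of_nonneg hτ.le, Complex.norm_of_nonneg hD.le, norm_prod]
    simp only [norm_neg, norm_inv]
    rw [Fin.prod_univ_three]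
    field_simp
  rw [hrw, div_lt_div_iff₀ (by positivity)
    (mul_pos (mul_pos (hpos 0) (hpos 1)) (hpos 2))]
  have m1 : ‖a 1‖ * ‖a 2‖ ≤ (2*τ) * (2*τ) :=
    mul_le_mul h1 h2 (hpos 2).le (by positivity)
  have m2 : ‖a 0‖ * (‖a 1‖ * ‖a 2‖)
      < (τ*s) * ((2*τ) * (2*τ)) := by
    nlinarith [m1, h0, hpos 0, mul_pos (hpos 1) (hpos 2), mul_pos hτ hτ, mul_pos hτ hs]
  nlinarith [mul_lt_mul_of_pos_left m2 hD]

set_option maxHeartbeats 1000000 in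
/-- lower bound `|τ³ ∫_{𝒦₀} e^{ρ·x} dx| > |w₁·(w₂×w₃)|/(4s)`. -/
theorem tau_cubed_integral_lower_bound
    (w : Fin 3 → (Fin 3 → ℝ)) (hw : ∀ j, nrm (w j) = 1)
    (hli : LinearIndependent ℝ w)
    (z : Fin 3 → ℝ) (hz : nrm z = 1) (horth : dotR z (w 0) = 0)
    (κ : ℝ) (hκ0 : 0 < κ) (hκ1 : κ < 1)
    (hzw1 : dotR z (w 1) < -κ) (hzw2 : dotR z (w 2) < -κ)
    (s : ℝ) (hs0 : 0 < s) (hs1 : s ≤ κ / 3)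
    (k τ : ℝ) (hk : 0 ≤ k) (hτk : k ≤ τ) (hτ : 0 < τ) :
    |dotR (w 0) (crossProduct (w 1) (w 2))| / (4 * s) <
      ‖(τ : ℂ) ^ 3 *
        ∫ x in {x | ∃ c : Fin 3 → ℝ, (∀ j, 0 < c j) ∧ x = ∑ j, c j • w j},
          Complex.exp
            (dotC (fun i => (τ * ((z i - s * w 0 i) / Real.sqrt (1 + s ^ 2)) : ℝ)
                    + Complex.I * (Real.sqrt (τ ^ 2 + k ^ 2) * (crossProduct (w 0) z) i : ℝ))
              (toC x))‖ := by
  set q : ℝ := Real.sqrt (1 + s ^ 2) with hqdef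
  set u : ℝ := Real.sqrt (τ ^ 2 + k ^ 2) with hudef
  have hq0 : 0 < q := by rw [hqdef]; positivity
  have hq2 : q^2 = 1 + s^2 := by rw [hqdef]; exact Real.sq_sqrt (by positivity)
  have hq1 : 1 < q := by nlinarith [hq2, hq0.le, mul_pos hs0 hs0]
  have hu2 : u^2 = τ^2 + k^2 := by rw [hudef]; exact Real.sq_sqrt (by positivity)
  set ρ : Fin 3 → ℂ := fun i => ((τ * ((z i - s * w 0 i) / q) : ℝ) : ℂ)
      + Complex.I * ((u * (crossProduct (w 0) z) i : ℝ) : ℂ) with hρ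
  have ha_re : ∀ j, (dotC ρ (toC (w j))).re
      = τ * ((dotR z (w j) - s * dotR (w 0) (w j)) / q) := by
    intro j
    simp only [hρ, dotC, toC, dotR, Fin.sum_univ_three, Complex.add_re, Complex.mul_re,
      Complex.ofReal_re, Complex.ofReal_im, Complex.I_re, Complex.I_im, Complex.add_im,
      Complex.mul_im]
    ring
  have ha_im : ∀ j, (dotC ρ (toC (w j))).im
      = u * dotR (crossProduct (w 0) z) (w j) := by
    intro j
    simp only [hρ, dotC, toC, dotR, Fin.sum_univ_three, Complex.add_re, Complex.mul_re,
      Complex.ofReal_re, Complex.ofReal_im, Complex.I_re, Complex.I_im, Complex.add_im,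
      Complex.mul_im]
    ring
  have hw2 : ∀ j, ∑ i, w j i ^2 = 1 := fun j => sumsq_of_nrm_eq_one (hw j)
  have hz2 : ∑ i, z i ^2 = 1 := sumsq_of_nrm_eq_one hz
  have hw00 : dotR (w 0) (w 0) = 1 := by
    have h : dotR (w 0) (w 0) = ∑ i, w 0 i ^2 := Finset.sum_congr rfl fun i _ => (sq _).symm
    rw [h, hw2 0]
  have hd0 : ∀ j, (dotR (w 0) (w j))^2 ≤ 1 := by
    intro j
    have := dotR_cs (w 0) (w j)
    rwa [hw2 0, hw2 j, one_mul] at this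
  have hdz : ∀ j, (dotR z (w j))^2 ≤ 1 := by
    intro j
    have := dotR_cs z (w j)
    rwa [hz2, hw2 j, one_mul] at this
  have horth' : dotR (w 0) z = 0 := by
    have h : dotR (w 0) z = dotR z (w 0) := Finset.sum_congr rfl fun i _ => mul_comm _ _
    rw [h, horth]
  have hcr2 : ∑ i, (crossProduct (w 0) z) i ^2 = 1 := by
    rw [lagrange_cross, hw2 0, hz2, horth']
    norm_num
  have hdc : ∀ j, (dotR (crossProduct (w 0) z) (w j))^2 ≤ 1 := by
    intro j
    have := dotR_cs (crossProduct (w 0) z) (w j)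
    rwa [hcr2, hw2 j, one_mul] at this
  have hdc0 : dotR (crossProduct (w 0) z) (w 0) = 0 := by
    simp only [dotR, cross_apply, Fin.sum_univ_three, Matrix.cons_val_zero,
      Matrix.cons_val_one, Matrix.head_cons, Matrix.cons_val_two, Matrix.tail_cons]
    ring
  have hre : ∀ j, (dotC ρ (toC (w j))).re < 0 := by
    intro j
    rw [ha_re j]
    have hnum : dotR z (w j) - s * dotR (w 0) (w j) < 0 := by
      fin_cases j
      · show dotR z (w 0) - s * dotR (w 0) (w 0) < 0
        rw [horth, hw00]; nlinarith
      · show dotR z (w 1) - s * dotR (w 0) (w 1) < 0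
        nlinarith [hd0 1, hzw1, hs0, hκ0, hs1, hκ1,
          sq_nonneg (dotR (w 0) (w 1) + 1)]
      · show dotR z (w 2) - s * dotR (w 0) (w 2) < 0
        nlinarith [hd0 2, hzw2, hs0, hκ0, hs1, hκ1,
          sq_nonneg (dotR (w 0) (w 2) + 1)]
    exact mul_neg_of_pos_of_neg hτ (div_neg_of_neg_of_pos hnum hq0)
  have hApos : ∀ j, 0 < ‖dotC ρ (toC (w j))‖ := by
    intro j
    apply norm_pos_iff.mpr
    intro h
    have h2 := hre j
    rw [h] at h2
    simp at h2
  have habs0 : ‖dotC ρ (toC (w 0))‖ < τ * s := by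
    have hsq : ‖dotC ρ (toC (w 0))‖^2 < (τ*s)^2 := by
      rw [Complex.sq_norm, Complex.normSq_apply, ha_re 0, ha_im 0, horth, hw00, hdc0]
      have h5 : τ * ((0 - s * 1) / q) = -(τ*s/q) := by ring
      rw [h5]
      simp only [mul_zero, zero_mul, add_zero]
      have h6 : (-(τ*s/q)) * (-(τ*s/q)) = (τ*s)^2/q^2 := by
        field_simp
      rw [h6]
      exact div_lt_self (by positivity) (by nlinarith)
    exact lt_of_pow_lt_pow_left₀ 2 (by positivity) hsq
  have habs12 : ∀ j, dotR z (w j) < -κ → ‖dotC ρ (toC (w j))‖ ≤ 2*τ := by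
    intro j hdzj
    have hb1 : -1 ≤ dotR z (w j) ∧ dotR z (w j) ≤ 1 := by
      constructor <;> nlinarith [hdz j]
    have hb2 : -1 ≤ dotR (w 0) (w j) ∧ dotR (w 0) (w j) ≤ 1 := by
      constructor <;> nlinarith [hd0 j]
    have hsq : ‖dotC ρ (toC (w j))‖^2 ≤ (2*τ)^2 := by
      rw [Complex.sq_norm, Complex.normSq_apply, ha_re j, ha_im j]
      have hx1 : dotR z (w j) - s * dotR (w 0) (w j) ≤ 1 + s := by
        nlinarith [hb1.2, hb2.1, hs0]
      have hx2 : -(1+s) ≤ dotR z (w j) - s * dotR (w 0) (w j) := by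
        nlinarith [hb1.1, hb2.2, hs0]
      have hx : (dotR z (w j) - s * dotR (w 0) (w j))^2 ≤ (1+s)^2 := sq_le_sq' hx2 hx1
      have e1 : (τ*((dotR z (w j) - s * dotR (w 0) (w j))/q))
            * (τ*((dotR z (w j) - s * dotR (w 0) (w j))/q))
          = τ^2 * (dotR z (w j) - s * dotR (w 0) (w j))^2 / q^2 := by
        field_simp
      have e2 : (u * dotR (crossProduct (w 0) z) (w j))
            * (u * dotR (crossProduct (w 0) z) (w j))
          = (τ^2+k^2) * (dotR (crossProduct (w 0) z) (w j))^2 := by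
        rw [← hu2]; ring
      rw [e1, e2, hq2]
      have t1 : τ^2 * (dotR z (w j) - s * dotR (w 0) (w j))^2 / (1+s^2) ≤ 2*τ^2 := by
        rw [div_le_iff₀ (by positivity)]
        nlinarith [mul_le_mul_of_nonneg_left hx (sq_nonneg τ),
          mul_nonneg (sq_nonneg τ) (sq_nonneg (1-s))]
      have t2 : (τ^2+k^2) * (dotR (crossProduct (w 0) z) (w j))^2 ≤ 2*τ^2 := by
        nlinarith [mul_le_mul_of_nonneg_left (hdc j) (by positivity : (0:ℝ) ≤ τ^2+k^2),
          hk, hτk]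
      nlinarith [t1, t2]
    exact le_of_pow_le_pow_left₀ two_ne_zero (by positivity) hsq
  have hU : IsUnit (Matrix.of w) := by
    rw [← Matrix.linearIndependent_rows_iff_isUnit]
    exact hli
  have hdet_pos : 0 < |(Matrix.of w).det| :=
    abs_pos.mpr ((Matrix.isUnit_iff_isUnit_det _).mp hU).ne_zero
  have htp' : dotR (w 0) (crossProduct (w 1) (w 2)) = (Matrix.of w).det := by
    rw [Matrix.det_fin_three]
    simp only [dotR, cross_apply, Fin.sum_univ_three, Matrix.of_apply,
      Matrix.cons_val_zero, Matrix.cons_val_one, Matrix.head_cons,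
      Matrix.cons_val_two, Matrix.tail_cons]
    ring
  rw [cone_integral w hli ρ hre, htp']
  exact final_calc _ s τ hdet_pos hs0 hτ (fun j => dotC ρ (toC (w j))) habs0
    (habs12 1 hzw1) (habs12 2 hzw2) hApos
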